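/- arXiv:1802.05560 — 6 statements merged into one kernel-verified Lean document; each statement's English description precedes it below -/
import Mathlib

section
/- Let Ω ⊆ ℝⁿ be open, let Ψ : Ω → ℝ be twice continuously differentiable with ∇Ψ(x) ≠ 0 for every x ∈ Ω, let S = {x ∈ Ω : Ψ(x) = 0}, and let ν(x) = ∇Ψ(x)/‖∇Ψ(x)‖. Let N : Ω → ℝⁿ be continuously differentiable with ‖N(y)‖ = 1 for all y ∈ Ω and N(x) = ν(x) for all x ∈ S. Then the following two conditions are equivalent: (i) (∂_N N)(x) = 0 for all x ∈ S; (ii) ∂_k N_j(x) = ∂_j N_k(x) for all x ∈ S and all j, k ∈ {1,…,n}. -/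
/-- The `k`-th partial derivative of a scalar function on `ℝⁿ`. -/
noncomputable def pder {n : ℕ} (f : EuclideanSpace ℝ (Fin n) → ℝ) (k : Fin n)
    (x : EuclideanSpace ℝ (Fin n)) : ℝ :=
  fderiv ℝ f x (EuclideanSpace.single k 1)
open Filter Topology RealInnerProductSpace InnerProductSpace

section aux
variable {n : ℕ}
local notation "E" => EuclideanSpace ℝ (Fin n)

-- differentiability of N at points of Ω
lemma NdiffAt {Ω : Set E} (hΩ : IsOpen Ω) {N : E → E} (hN : ContDiffOn ℝ 1 N Ω)
    {x : E} (hx : x ∈ Ω) : DifferentiableAt ℝ N x :=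
  (hN.contDiffAt (hΩ.mem_nhds hx)).differentiableAt one_ne_zero

-- pder of a component in terms of the full fderiv
lemma pder_eq {N : E → E} {x : E} (hNd : DifferentiableAt ℝ N x) (j k : Fin n) :
    fderiv ℝ (fun y => N y j) x (EuclideanSpace.single k 1)
      = fderiv ℝ N x (EuclideanSpace.single k 1) j := by
  have h : (fun y => N y j) = fun y => (EuclideanSpace.proj j : E →L[ℝ] ℝ) (N y) := by
    funext y; simp
  rw [h]
  have := ((EuclideanSpace.proj j : E →L[ℝ] ℝ).hasFDerivAt.comp x hNd.hasFDerivAt).fderiv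
  rw [show (fun y => (EuclideanSpace.proj j : E →L[ℝ] ℝ) (N y))
      = (EuclideanSpace.proj j : E →L[ℝ] ℝ) ∘ N from rfl, this]
  simp

-- orthogonality from unit norm
lemma Jorth {Ω : Set E} (hΩ : IsOpen Ω) {N : E → E} (hN : ContDiffOn ℝ 1 N Ω)
    (hunit : ∀ y ∈ Ω, ‖N y‖ = 1) {x : E} (hx : x ∈ Ω) (v : E) :
    ⟪fderiv ℝ N x v, N x⟫ = 0 := by
  have hNd := NdiffAt hΩ hN hx
  have hconst : (fun y => (⟪N y, N y⟫ : ℝ)) =ᶠ[𝓝 x] fun _ => (1 : ℝ) := by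
    filter_upwards [hΩ.mem_nhds hx] with y hy
    rw [real_inner_self_eq_norm_sq, hunit y hy]; norm_num
  have h0 : fderiv ℝ (fun y => (⟪N y, N y⟫ : ℝ)) x = 0 := by
    rw [hconst.fderiv_eq]; exact fderiv_const_apply 1
  have h2 := fderiv_inner_apply (𝕜 := ℝ) hNd hNd v
  rw [h0] at h2
  simp only [ContinuousLinearMap.zero_apply] at h2
  linarith [real_inner_comm ((fderiv ℝ N x) v) (N x)]

end aux


lemma surjcl {E : Type*} [NormedAddCommGroup E] [NormedSpace ℝ E]
    {ℓ : E →L[ℝ] ℝ} (h : ℓ ≠ 0) : ℓ.range = ⊤ := by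
  rcases ContinuousLinearMap.exists_ne_zero h with ⟨v, hv⟩
  rw [LinearMap.range_eq_top]
  intro c
  exact ⟨(c / ℓ v) • v, by simp [div_mul_cancel₀, hv]⟩

lemma tangent_fderiv_zero {E : Type*} [NormedAddCommGroup E] [NormedSpace ℝ E] [CompleteSpace E]
    {Ψ g : E → ℝ} {x : E}
    (hΨ : HasStrictFDerivAt Ψ (fderiv ℝ Ψ x) x)
    (hne : fderiv ℝ Ψ x ≠ 0)
    (hg : DifferentiableAt ℝ g x)
    (hzero : ∀ᶠ y in 𝓝 x, Ψ y = 0 → g y = 0)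
    (hx : Ψ x = 0)
    {v : E} (hv : fderiv ℝ Ψ x v = 0) : fderiv ℝ g x v = 0 := by
  set f' := fderiv ℝ Ψ x with hf'
  have hsurj : f'.range = ⊤ := surjcl hne
  set φ := hΨ.implicitFunction Ψ f' hsurj with hφ
  have hst : HasStrictFDerivAt (φ (Ψ x)) (LinearMap.ker (f' : E →ₗ[ℝ] ℝ)).subtypeL 0 :=
    hΨ.to_implicitFunction hsurj
  have htend : Tendsto (fun z : LinearMap.ker (f' : E →ₗ[ℝ] ℝ) => φ (Ψ x) z) (𝓝 0) (𝓝 x) :=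
    hΨ.tendsto_implicitFunction hsurj tendsto_const_nhds tendsto_id
  have hpair : Tendsto (fun z : LinearMap.ker (f' : E →ₗ[ℝ] ℝ) => ((Ψ x, z) : ℝ × LinearMap.ker (f' : E →ₗ[ℝ] ℝ)))
      (𝓝 0) (𝓝 (Ψ x, 0)) := tendsto_const_nhds.prodMk_nhds tendsto_id
  have h1 : ∀ᶠ z : LinearMap.ker (f' : E →ₗ[ℝ] ℝ) in 𝓝 0, Ψ (φ (Ψ x) z) = 0 := by
    filter_upwards [hpair.eventually (hΨ.map_implicitFunction_eq hsurj)] with z hz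
    simpa [hx] using hz
  have h2 : ∀ᶠ z : LinearMap.ker (f' : E →ₗ[ℝ] ℝ) in 𝓝 0, g (φ (Ψ x) z) = 0 := by
    filter_upwards [h1, htend.eventually hzero] with z hz1 hz2
    exact hz2 hz1
  have himg : φ (Ψ x) 0 = x := hΨ.implicitFunction_apply_image hsurj
  have hd : HasFDerivAt (fun z => g (φ (Ψ x) z))
      ((fderiv ℝ g x).comp (LinearMap.ker (f' : E →ₗ[ℝ] ℝ)).subtypeL) 0 := by
    have hgd : HasFDerivAt g (fderiv ℝ g x) (φ (Ψ x) 0) := by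
      rw [himg]; exact hg.hasFDerivAt
    exact hgd.comp (0 : LinearMap.ker (f' : E →ₗ[ℝ] ℝ)) hst.hasFDerivAt
  have hzero' : HasFDerivAt (fun z => g (φ (Ψ x) z)) (0 : LinearMap.ker (f' : E →ₗ[ℝ] ℝ) →L[ℝ] ℝ) (0 : LinearMap.ker (f' : E →ₗ[ℝ] ℝ)) := by
    have hc : HasFDerivAt (fun _ : LinearMap.ker (f' : E →ₗ[ℝ] ℝ) => (0 : ℝ)) (0 : LinearMap.ker (f' : E →ₗ[ℝ] ℝ) →L[ℝ] ℝ) 0 := hasFDerivAt_const _ _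
    exact hc.congr_of_eventuallyEq (h2.mono fun z hz => hz)
  have heq : (fderiv ℝ g x).comp (LinearMap.ker (f' : E →ₗ[ℝ] ℝ)).subtypeL = 0 := hd.unique hzero'
  have := congrFun (congrArg (fun (L : _ →L[ℝ] ℝ) => (L : _ → ℝ)) heq)
    (⟨v, hv⟩ : LinearMap.ker (f' : E →ₗ[ℝ] ℝ))
  simpa using this

section aux2
variable {n : ℕ}
local notation "E" => EuclideanSpace ℝ (Fin n)

-- the key tangential computation and symmetry of the bilinear form of J on S
lemma aux_symm {Ω : Set E} (hΩ : IsOpen Ω)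
    {Ψ : E → ℝ} (hΨ : ContDiffOn ℝ 2 Ψ Ω)
    (hgrad : ∀ x ∈ Ω, gradient Ψ x ≠ 0)
    {ν : E → E} (hν : ∀ x ∈ Ω, ν x = ‖gradient Ψ x‖⁻¹ • gradient Ψ x)
    {N : E → E} (hN : ContDiffOn ℝ 1 N Ω)
    (hunit : ∀ y ∈ Ω, ‖N y‖ = 1)
    (hext : ∀ x ∈ Ω, Ψ x = 0 → N x = ν x)
    {x : E} (hx : x ∈ Ω) (hx0 : Ψ x = 0)
    (hNN : fderiv ℝ N x (N x) = 0) :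
    ∀ u v : E, ⟪fderiv ℝ N x u, v⟫ = ⟪fderiv ℝ N x v, u⟫ := by

  have hxΩ : Ω ∈ 𝓝 x := hΩ.mem_nhds hx
  have hNd : DifferentiableAt ℝ N x := (hN.contDiffAt hxΩ).differentiableAt one_ne_zero
  have hΨx : ContDiffAt ℝ 2 Ψ x := hΨ.contDiffAt hxΩ
  have hstrict : HasStrictFDerivAt Ψ (fderiv ℝ Ψ x) x :=
    hΨx.hasStrictFDerivAt (by norm_num)
  set J := fderiv ℝ N x with hJ
  set G : E → E := fun y => (toDual ℝ E).symm (fderiv ℝ Ψ y) with hGdef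
  have hGgrad : ∀ y, G y = gradient Ψ y := fun _ => rfl
  have hG0 : G x ≠ 0 := by rw [hGgrad]; exact hgrad x hx
  have hℓ : ∀ w, fderiv ℝ Ψ x w = ⟪G x, w⟫ := fun w => (toDual_symm_apply).symm
  have hne : fderiv ℝ Ψ x ≠ 0 := by
    intro h
    apply hG0
    rw [hGdef]
    simp [h]
  -- C¹ smoothness of the gradient field G
  have hΨ' : ContDiffOn ℝ (1 + 1) Ψ Ω := by exact_mod_cast hΨ
  have hfd : ContDiffOn ℝ 1 (fderiv ℝ Ψ) Ω :=
    ((contDiffOn_succ_iff_fderiv_of_isOpen hΩ).mp hΨ').2.2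
  have hfdx : ContDiffAt ℝ 1 (fderiv ℝ Ψ) x := hfd.contDiffAt hxΩ
  have hGc : ContDiffAt ℝ 1 G x :=
    ((toDual ℝ E).symm.contDiff.contDiffAt).comp x hfdx
  have hGd : DifferentiableAt ℝ G x := hGc.differentiableAt one_ne_zero
  set G' := fderiv ℝ G x with hG'def
  -- identify G' with the second derivative of Ψ
  set ιL := ((toDual ℝ E).symm.toContinuousLinearEquiv :
      (StrongDual ℝ E) ≃L[ℝ] E).toContinuousLinearMap with hιL
  have hΨ2d : HasFDerivAt (fderiv ℝ Ψ) (fderiv ℝ (fderiv ℝ Ψ) x) x :=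
    (hfdx.differentiableAt one_ne_zero).hasFDerivAt
  have hGder : HasFDerivAt G (ιL.comp (fderiv ℝ (fderiv ℝ Ψ) x)) x := by
    have := ιL.hasFDerivAt.comp x hΨ2d
    exact this
  have hG'eq : G' = ιL.comp (fderiv ℝ (fderiv ℝ Ψ) x) := hGder.fderiv
  have hG'app : ∀ v w : E, ⟪G' v, w⟫ = fderiv ℝ (fderiv ℝ Ψ) x v w := by
    intro v w
    rw [hG'eq]
    simp only [ContinuousLinearMap.coe_comp', Function.comp_apply]
    rw [hιL]
    simp only [ContinuousLinearEquiv.coe_coe, LinearIsometryEquiv.coe_toContinuousLinearEquiv]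
    exact toDual_symm_apply
  have hsnd : ∀ v w : E, ⟪G' v, w⟫ = ⟪G' w, v⟫ := by
    intro v w
    rw [hG'app, hG'app]
    exact (hΨx.isSymmSndFDerivAt (by simp)) v w
  -- the tangential identity
  have hkey : ∀ u v : E, fderiv ℝ Ψ x u = 0 → fderiv ℝ Ψ x v = 0 →
      ⟪J v, u⟫ = ‖G x‖⁻¹ * ⟪G' v, u⟫ := by
    intro u v hu hv
    set p : E → ℝ := fun y => ⟪N y, u⟫ - ‖G y‖⁻¹ * ⟪G y, u⟫ with hpdef
    have hq : DifferentiableAt ℝ (fun y => ‖G y‖⁻¹) x :=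
      (((hGc.norm ℝ hG0).inv (norm_ne_zero_iff.mpr hG0)).differentiableAt one_ne_zero)
    have hiN : DifferentiableAt ℝ (fun y => (⟪N y, u⟫ : ℝ)) x :=
      hNd.inner ℝ (differentiableAt_const u)
    have hiG : DifferentiableAt ℝ (fun y => (⟪G y, u⟫ : ℝ)) x :=
      hGd.inner ℝ (differentiableAt_const u)
    have hpd : DifferentiableAt ℝ p x := hiN.sub (hq.mul hiG)
    have hzero : ∀ᶠ y in 𝓝 x, Ψ y = 0 → p y = 0 := by
      filter_upwards [hxΩ] with y hy hΨy
      have h1 : N y = ‖G y‖⁻¹ • G y := by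
        rw [hext y hy hΨy, hν y hy, hGgrad]
      rw [hpdef]
      simp only
      rw [h1, real_inner_smul_left]
      ring
    have hL := tangent_fderiv_zero hstrict hne hpd hzero hx0 hv
    -- compute fderiv p x v
    have hdiN : fderiv ℝ (fun y => (⟪N y, u⟫ : ℝ)) x v = ⟪J v, u⟫ := by
      rw [fderiv_inner_apply (𝕜 := ℝ) hNd (differentiableAt_const u) v]
      simp [hJ]
    have hdiG : fderiv ℝ (fun y => (⟪G y, u⟫ : ℝ)) x v = ⟪G' v, u⟫ := by
      rw [fderiv_inner_apply (𝕜 := ℝ) hGd (differentiableAt_const u) v]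
      simp [hG'def]
    have hGxu : (⟪G x, u⟫ : ℝ) = 0 := by rw [← hℓ]; exact hu
    have hdp : fderiv ℝ p x v = ⟪J v, u⟫ - ‖G x‖⁻¹ * ⟪G' v, u⟫ := by
      rw [hpdef]
      rw [fderiv_fun_sub (g := fun y => ‖G y‖⁻¹ * (⟪G y, u⟫ : ℝ)) hiN (hq.mul hiG)]
      rw [fderiv_fun_mul hq hiG]
      simp only [ContinuousLinearMap.sub_apply, ContinuousLinearMap.add_apply,
        ContinuousLinearMap.smul_apply, smul_eq_mul]
      rw [hdiN, hdiG, hGxu]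
      ring
    rw [hL] at hdp
    linarith [hdp]
  -- decompose arbitrary vectors into tangential part plus multiple of N x
  intro u v
  have orthJ : ∀ w : E, ⟪J w, N x⟫ = 0 := fun w => Jorth hΩ hN hunit hx w
  set c := fderiv ℝ Ψ x (N x) with hcdef
  have hNx : N x = ‖G x‖⁻¹ • G x := by rw [hext x hx hx0, hν x hx, hGgrad]
  have hc : c = ‖G x‖ := by
    rw [hcdef, hℓ, hNx, real_inner_smul_right, real_inner_self_eq_norm_sq, sq]
    field_simp
  have hcne : c ≠ 0 := by rw [hc]; exact norm_ne_zero_iff.mpr hG0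
  have htang : ∀ w : E, fderiv ℝ Ψ x (w - (fderiv ℝ Ψ x w / c) • N x) = 0 := by
    intro w
    rw [map_sub, map_smul, smul_eq_mul, ← hcdef]
    field_simp
    ring
  have expand : ∀ w z : E,
      ⟪J w, z⟫ = ⟪J (w - (fderiv ℝ Ψ x w / c) • N x), z - (fderiv ℝ Ψ x z / c) • N x⟫ := by
    intro w z
    have h1 : J w = J (w - (fderiv ℝ Ψ x w / c) • N x) := by
      rw [map_sub, map_smul, hNN]; simp
    rw [h1]
    nth_rewrite 1 [show z = (z - (fderiv ℝ Ψ x z / c) • N x) + (fderiv ℝ Ψ x z / c) • N x by abel]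
    rw [inner_add_right, real_inner_smul_right, orthJ]
    ring
  rw [expand u v, expand v u]
  rw [hkey _ _ (htang v) (htang u), hkey _ _ (htang u) (htang v), hsnd]


end aux2

section main
variable {n : ℕ}
local notation "E" => EuclideanSpace ℝ (Fin n)


lemma hbasis (x : E) : x = ∑ k, x k • EuclideanSpace.single k (1:ℝ) := by
  ext i
  rw [WithLp.ofLp_sum, Finset.sum_apply i Finset.univ]
  simp [EuclideanSpace.single_apply]

lemma hsum {N : E → E} {x : E} (hNd : DifferentiableAt ℝ N x) (j : Fin n) :
    (∑ k, N x k * pder (fun y => N y j) k x) = fderiv ℝ N x (N x) j := by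
  conv_rhs => rw [hbasis (N x)]
  rw [map_sum, WithLp.ofLp_sum, Finset.sum_apply j Finset.univ]
  apply Finset.sum_congr rfl
  intro k _
  rw [map_smul, PiLp.smul_apply, smul_eq_mul]
  unfold pder
  rw [pder_eq hNd j k]

/-- For a unitary `C¹` extension `N` of the unit normal field `ν = ∇Ψ/‖∇Ψ‖` of the
hypersurface `S = {Ψ = 0}`, the following are equivalent:
(i) `∂_N N = 0` on `S`; (ii) `∂_k N_j = ∂_j N_k` on `S` for all `j, k`. -/
theorem selfDeriv_zero_iff_symm_jacobian_on_surface {n : ℕ}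
    (Ω : Set (EuclideanSpace ℝ (Fin n))) (hΩ : IsOpen Ω)
    (Ψ : EuclideanSpace ℝ (Fin n) → ℝ) (hΨ : ContDiffOn ℝ 2 Ψ Ω)
    (hgrad : ∀ x ∈ Ω, gradient Ψ x ≠ 0)
    (ν : EuclideanSpace ℝ (Fin n) → EuclideanSpace ℝ (Fin n))
    (hν : ∀ x ∈ Ω, ν x = ‖gradient Ψ x‖⁻¹ • gradient Ψ x)
    (N : EuclideanSpace ℝ (Fin n) → EuclideanSpace ℝ (Fin n))
    (hN : ContDiffOn ℝ 1 N Ω)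
    (hunit : ∀ y ∈ Ω, ‖N y‖ = 1)
    (hext : ∀ x ∈ Ω, Ψ x = 0 → N x = ν x) :
    (∀ x ∈ Ω, Ψ x = 0 →
        ∀ j : Fin n, ∑ k, N x k * pder (fun y => N y j) k x = 0) ↔
    (∀ x ∈ Ω, Ψ x = 0 →
        ∀ j k : Fin n, pder (fun y => N y j) k x = pder (fun y => N y k) j x) := by
  constructor
  · intro hi x hx hx0 j k
    have hNd : DifferentiableAt ℝ N x := NdiffAt hΩ hN hx
    have hNN : fderiv ℝ N x (N x) = 0 := by
      ext i
      rw [← hsum hNd i]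
      simpa using hi x hx hx0 i
    have hs := aux_symm hΩ hΨ hgrad hν hN hunit hext hx hx0 hNN
      (EuclideanSpace.single k 1) (EuclideanSpace.single j 1)
    simp only [EuclideanSpace.inner_single_right, conj_trivial, one_mul] at hs
    unfold pder
    rw [pder_eq hNd j k, pder_eq hNd k j]
    exact hs
  · intro hii x hx hx0 j
    have hNd : DifferentiableAt ℝ N x := NdiffAt hΩ hN hx
    calc ∑ k, N x k * pder (fun y => N y j) k x
        = ∑ k, N x k * fderiv ℝ N x (EuclideanSpace.single j 1) k := by
          apply Finset.sum_congr rfl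
          intro k _
          rw [hii x hx hx0 j k]
          unfold pder
          rw [pder_eq hNd k j]
      _ = ⟪fderiv ℝ N x (EuclideanSpace.single j 1), N x⟫ := by
          rw [PiLp.inner_apply]
          exact Finset.sum_congr rfl fun k _ => by simp [mul_comm]
      _ = 0 := Jorth hΩ hN hunit hx _
end main
end

section
/- Let Ω ⊆ ℝⁿ be open and let N : Ω → ℝⁿ be continuously differentiable with ‖N(y)‖ = 1 and ∂_j N_k(y) = ∂_k N_j(y) for all y ∈ Ω and all j, k. Let I ⊆ ℝ be an interval containing 0 and let γ : I → Ω be differentiable with γ'(τ) = N(γ(τ)) for all τ ∈ I. Then γ is a straight line segment: γ(τ) = γ(0) + τ N(γ(0)) for all τ ∈ I, and N(γ(τ)) = N(γ(0)) for all τ ∈ I. -/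
/-- An integral curve of a proper extension (a `C¹` unit vector field with symmetric
Jacobian) is a straight line segment, along which `N` is constant. -/
theorem integral_curve_of_proper_extension_is_line {n : ℕ}
    (Ω : Set (EuclideanSpace ℝ (Fin n))) (hΩ : IsOpen Ω)
    (N : EuclideanSpace ℝ (Fin n) → EuclideanSpace ℝ (Fin n))
    (hN : ContDiffOn ℝ 1 N Ω)
    (hunit : ∀ y ∈ Ω, ‖N y‖ = 1)
    (hsym : ∀ y ∈ Ω, ∀ j k : Fin n,
      pder (fun z => N z j) k y = pder (fun z => N z k) j y)
    (I : Set ℝ) (hIconv : Convex ℝ I) (h0I : (0 : ℝ) ∈ I)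
    (γ : ℝ → EuclideanSpace ℝ (Fin n))
    (hγΩ : ∀ τ ∈ I, γ τ ∈ Ω)
    (hγ : ∀ τ ∈ I, HasDerivWithinAt γ (N (γ τ)) I τ) :
    ∀ τ ∈ I, γ τ = γ 0 + τ • N (γ 0) ∧ N (γ τ) = N (γ 0) := by
  -- Key pointwise fact: DN(y) · N(y) = 0 for y ∈ Ω
  have key : ∀ y ∈ Ω, fderiv ℝ N y (N y) = 0 := by
    intro y hy
    have hdiff : DifferentiableAt ℝ N y :=
      (hN.contDiffAt (hΩ.mem_nhds hy)).differentiableAt one_ne_zero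
    set A := fderiv ℝ N y with hAdef
    have hAfd : HasFDerivAt N A y := hdiff.hasFDerivAt
    -- symmetry of the Jacobian
    have hsymA : ∀ j k : Fin n,
        A (EuclideanSpace.single k 1) j = A (EuclideanSpace.single j 1) k := by
      intro j k
      have h1 : ∀ j : Fin n,
          fderiv ℝ (fun z => N z j) y = (EuclideanSpace.proj j).comp A := by
        intro j
        exact ((EuclideanSpace.proj j).hasFDerivAt.comp y hAfd).fderiv
      have h2 := hsym y hy j k
      simp only [pder, h1, ContinuousLinearMap.comp_apply] at h2
      exact h2
    -- orthogonality: ⟪A v, N y⟫ = 0 for all v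
    have horth : ∀ v, (inner ℝ (A v) (N y) : ℝ) = 0 := by
      intro v
      have hconst : (fun z => (inner ℝ (N z) (N z) : ℝ)) =ᶠ[nhds y] fun _ => 1 := by
        filter_upwards [hΩ.mem_nhds hy] with z hz
        rw [real_inner_self_eq_norm_sq, hunit z hz]; norm_num
      have hinner := hAfd.inner ℝ hAfd
      have hzero : HasFDerivAt (fun z => (inner ℝ (N z) (N z) : ℝ)) 0 y :=
        (hasFDerivAt_const (𝕜 := ℝ) (1 : ℝ) y).congr_of_eventuallyEq hconst
      have huniq := hinner.unique hzero
      have h3 := congrArg (fun (L : EuclideanSpace ℝ (Fin n) →L[ℝ] ℝ) => L v) huniq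
      simp only [ContinuousLinearMap.comp_apply, ContinuousLinearMap.prod_apply,
        fderivInnerCLM_apply, ContinuousLinearMap.zero_apply] at h3
      have hsymm : (inner ℝ (N y) (A v) : ℝ) = inner ℝ (A v) (N y) := real_inner_comm _ _
      linarith [h3, hsymm]
    -- conclude A (N y) = 0
    have hNy : N y = ∑ k, (N y k) • EuclideanSpace.single k (1 : ℝ) := by
      have h := (EuclideanSpace.basisFun (Fin n) ℝ).sum_repr (N y)
      simp only [EuclideanSpace.basisFun_apply, EuclideanSpace.basisFun_repr] at h
      exact h.symm
    ext j
    have hLc : A (N y) j = ((EuclideanSpace.proj j).comp A) (N y) := rfl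
    have hc : A (N y) j = ∑ k, N y k * A (EuclideanSpace.single k 1) j := by
      rw [hLc]
      conv_lhs => rw [hNy]
      rw [map_sum]
      simp [smul_eq_mul]
    have hip : (inner ℝ (A (EuclideanSpace.single j 1)) (N y) : ℝ)
        = ∑ k, A (EuclideanSpace.single j 1) k * N y k := by
      simp [PiLp.inner_apply, RCLike.inner_apply, conj_trivial, mul_comm]
    have : A (N y) j = (inner ℝ (A (EuclideanSpace.single j 1)) (N y) : ℝ) := by
      rw [hc, hip]
      exact Finset.sum_congr rfl fun k _ => by rw [hsymA j k]; ring
    rw [this, horth]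
    simp
  -- N is constant along γ
  have hNconst : ∀ τ ∈ I, N (γ τ) = N (γ 0) := by
    have hd : ∀ τ ∈ I, HasDerivWithinAt (fun t => N (γ t)) 0 I τ := by
      intro τ hτ
      have hdiff : HasFDerivAt N (fderiv ℝ N (γ τ)) (γ τ) :=
        ((hN.contDiffAt (hΩ.mem_nhds (hγΩ τ hτ))).differentiableAt one_ne_zero).hasFDerivAt
      have h := hdiff.comp_hasDerivWithinAt τ (hγ τ hτ)
      rwa [key (γ τ) (hγΩ τ hτ)] at h
    intro τ hτ
    have hb := hIconv.norm_image_sub_le_of_norm_hasDerivWithin_le (C := 0) hd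
      (fun x _ => by simp) h0I hτ
    simpa [sub_eq_zero] using hb
  intro τ hτ
  refine ⟨?_, hNconst τ hτ⟩
  have hg : ∀ t ∈ I, HasDerivWithinAt (fun t => γ t - t • N (γ 0)) 0 I t := by
    intro t ht
    have h1 := hγ t ht
    rw [hNconst t ht] at h1
    have h2 : HasDerivWithinAt (fun t : ℝ => t • N (γ 0)) (N (γ 0)) I t := by
      simpa using (hasDerivWithinAt_id t I).smul_const (N (γ 0))
    have h3 := h1.sub h2
    rw [sub_self] at h3
    exact h3
  have hb := hIconv.norm_image_sub_le_of_norm_hasDerivWithin_le (C := 0) hg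
    (fun x _ => by simp) h0I hτ
  have heq : γ τ - τ • N (γ 0) = γ 0 - (0 : ℝ) • N (γ 0) := by
    simpa [sub_eq_zero] using hb
  rw [zero_smul, sub_zero] at heq
  rw [sub_eq_iff_eq_add] at heq
  rw [heq, add_comm]
end

section
/- Let Ω ⊆ ℝⁿ be open and let N : Ω → ℝⁿ be continuously differentiable with ‖N(y)‖ = 1 and ∂_j N_k(y) = ∂_k N_j(y) for all y ∈ Ω and all j, k. Let x ∈ Ω and t ∈ ℝ be such that the segment {x + s N(x) : s between 0 and t} is contained in Ω. Then N(x + t N(x)) = N(x). -/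
open Set Real RealInnerProductSpace

lemma eucl_sum_single {n : ℕ} (v : EuclideanSpace ℝ (Fin n)) :
    v = ∑ i, v i • EuclideanSpace.single i (1 : ℝ) := by
  ext j
  rw [WithLp.ofLp_sum, Finset.sum_apply]
  simp [EuclideanSpace.single_apply]

lemma inner_fderiv_self_eq_zero {n : ℕ} {Ω : Set (EuclideanSpace ℝ (Fin n))} (hΩ : IsOpen Ω)
    {N : EuclideanSpace ℝ (Fin n) → EuclideanSpace ℝ (Fin n)}
    (hd : ∀ y ∈ Ω, DifferentiableAt ℝ N y)
    (hunit : ∀ y ∈ Ω, ‖N y‖ = 1) {y : EuclideanSpace ℝ (Fin n)} (hy : y ∈ Ω)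
    (v : EuclideanSpace ℝ (Fin n)) :
    ⟪fderiv ℝ N y v, N y⟫ = 0 := by
  have h1 : (fun z => ⟪N z, N z⟫) =ᶠ[nhds y] fun _ => (1 : ℝ) := by
    filter_upwards [hΩ.mem_nhds hy] with z hz
    rw [real_inner_self_eq_norm_mul_norm, hunit z hz]; norm_num
  have h2 : fderiv ℝ (fun z => ⟪N z, N z⟫) y = 0 := by
    rw [h1.fderiv_eq]; exact fderiv_const_apply 1
  have h3 := fderiv_inner_apply ℝ (hd y hy) (hd y hy) v
  rw [h2] at h3
  simp only [ContinuousLinearMap.zero_apply] at h3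
  have h4 := real_inner_comm (N y) (fderiv ℝ N y v)
  linarith [h3, h4]

/-- A proper extension (a `C¹` unit vector field with symmetric Jacobian on an open set
`Ω`) is constant along its normal segments: if the segment from `x` to `x + t N(x)`
lies in `Ω`, then `N(x + t N(x)) = N(x)`. -/
theorem proper_extension_constant_along_normal_segment {n : ℕ}
    (Ω : Set (EuclideanSpace ℝ (Fin n))) (hΩ : IsOpen Ω)
    (N : EuclideanSpace ℝ (Fin n) → EuclideanSpace ℝ (Fin n))
    (hN : ContDiffOn ℝ 1 N Ω)
    (hunit : ∀ y ∈ Ω, ‖N y‖ = 1)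
    (hsym : ∀ y ∈ Ω, ∀ j k : Fin n,
      pder (fun z => N z j) k y = pder (fun z => N z k) j y)
    (x : EuclideanSpace ℝ (Fin n)) (t : ℝ)
    (hseg : ∀ s ∈ Set.uIcc (0 : ℝ) t, x + s • N x ∈ Ω) :
    N (x + t • N x) = N x := by
  classical
  have hd : ∀ y ∈ Ω, DifferentiableAt ℝ N y := fun y hy =>
    ((hN.differentiableOn one_ne_zero) y hy).differentiableAt (hΩ.mem_nhds hy)
  -- component formula for the derivative
  have hcomp : ∀ y ∈ Ω, ∀ j : Fin n, ∀ v : EuclideanSpace ℝ (Fin n),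
      fderiv ℝ (fun z => N z j) y v = (fderiv ℝ N y v) j := by
    intro y hy j v
    have h : fderiv ℝ (fun z => N z j) y
        = (EuclideanSpace.proj j : EuclideanSpace ℝ (Fin n) →L[ℝ] ℝ).comp (fderiv ℝ N y) :=
      ((EuclideanSpace.proj j : EuclideanSpace ℝ (Fin n) →L[ℝ] ℝ).hasFDerivAt.comp y
        (hd y hy).hasFDerivAt).fderiv
    rw [h]; rfl
  -- symmetry of the Jacobian on basis vectors
  have hsymB : ∀ y ∈ Ω, ∀ j k : Fin n,
      (fderiv ℝ N y (EuclideanSpace.single k 1)) j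
        = (fderiv ℝ N y (EuclideanSpace.single j 1)) k := by
    intro y hy j k
    have h := hsym y hy j k
    unfold pder at h
    rw [hcomp y hy j _, hcomp y hy k _] at h
    exact h
  -- the Jacobian kills N y
  have hDNN : ∀ y ∈ Ω, fderiv ℝ N y (N y) = 0 := by
    intro y hy
    ext k
    have hrepr := eucl_sum_single (N y)
    have h1 : fderiv ℝ N y (N y)
        = ∑ j, (N y) j • fderiv ℝ N y (EuclideanSpace.single j 1) := by
      conv_lhs => rw [hrepr]
      rw [map_sum]
      simp
    rw [h1, WithLp.ofLp_sum, Finset.sum_apply]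
    have h2 : (∑ j, ((N y) j • fderiv ℝ N y (EuclideanSpace.single j 1)) k)
        = ∑ j, (N y) j * (fderiv ℝ N y (EuclideanSpace.single k 1)) j := by
      refine Finset.sum_congr rfl fun j _ => ?_
      rw [PiLp.smul_apply, hsymB y hy k j, smul_eq_mul]
    rw [h2]
    have hz := inner_fderiv_self_eq_zero hΩ hd hunit hy (EuclideanSpace.single k 1)
    rw [PiLp.inner_apply] at hz
    simp only [RCLike.inner_apply, conj_trivial] at hz
    rw [PiLp.zero_apply, ← hz]
  -- the curve
  set φ : ℝ → EuclideanSpace ℝ (Fin n) := fun σ => N (x + (σ * t) • N x) - N x with hφ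
  have hmem : ∀ σ ∈ Icc (0:ℝ) 1, x + (σ * t) • N x ∈ Ω := by
    intro σ hσ
    apply hseg
    rcases le_total 0 t with ht | ht
    · rw [uIcc_of_le ht]
      exact ⟨mul_nonneg hσ.1 ht, by nlinarith [hσ.1, hσ.2]⟩
    · rw [uIcc_of_ge ht]
      exact ⟨by nlinarith [hσ.1, hσ.2], mul_nonpos_of_nonneg_of_nonpos hσ.1 ht⟩
  -- derivative of φ
  have hderiv : ∀ σ ∈ Icc (0:ℝ) 1,
      HasDerivAt φ (t • fderiv ℝ N (x + (σ * t) • N x) (N x)) σ := by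
    intro σ hσ
    have hγ : HasDerivAt (fun σ : ℝ => x + (σ * t) • N x) (t • N x) σ := by
      have h1 : HasDerivAt (fun σ : ℝ => σ * t) t σ := by
        simpa using (hasDerivAt_id σ).mul_const t
      have h2 := h1.smul_const (N x)
      simpa using h2.const_add x
    have hNd := (hd _ (hmem σ hσ)).hasFDerivAt
    have h3 : HasDerivAt (fun σ : ℝ => N (x + (σ * t) • N x))
        (fderiv ℝ N (x + (σ * t) • N x) (t • N x)) σ := hNd.comp_hasDerivAt σ hγ
    rw [map_smul] at h3
    exact h3.sub_const (N x)
  -- bound on the Jacobian over the segment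
  obtain ⟨C, hC⟩ : ∃ C : ℝ, ∀ σ ∈ Icc (0:ℝ) 1,
      ‖fderiv ℝ N (x + (σ * t) • N x)‖ ≤ C := by
    have hK : IsCompact ((fun σ : ℝ => x + (σ * t) • N x) '' Icc 0 1) :=
      (isCompact_Icc).image (by fun_prop)
    have hcont : ContinuousOn (fun y => ‖fderiv ℝ N y‖)
        ((fun σ : ℝ => x + (σ * t) • N x) '' Icc 0 1) := by
      apply (hN.continuousOn_fderiv_of_isOpen hΩ le_rfl).norm.mono
      rintro _ ⟨σ, hσ, rfl⟩
      exact hmem σ hσ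
    obtain ⟨C, hC⟩ := hK.exists_bound_of_continuousOn hcont
    refine ⟨C, fun σ hσ => ?_⟩
    have := hC _ ⟨σ, hσ, rfl⟩
    rwa [norm_norm] at this
  -- φ satisfies ‖φ'‖ ≤ K ‖φ‖
  have key : ∀ σ ∈ Ico (0:ℝ) 1,
      ‖t • fderiv ℝ N (x + (σ * t) • N x) (N x)‖ ≤ (|t| * C) * ‖φ σ‖ + 0 := by
    intro σ hσ
    have hσ' : σ ∈ Icc (0:ℝ) 1 := ⟨hσ.1, le_of_lt hσ.2⟩
    set y := x + (σ * t) • N x with hy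
    have hyΩ : y ∈ Ω := hmem σ hσ'
    have h0 : fderiv ℝ N y (N x) = - fderiv ℝ N y (φ σ) := by
      have hφσ : φ σ = N y - N x := rfl
      rw [hφσ, map_sub, hDNN y hyΩ]
      abel
    rw [norm_smul, h0, norm_neg, Real.norm_eq_abs, add_zero]
    calc |t| * ‖fderiv ℝ N y (φ σ)‖
        ≤ |t| * (‖fderiv ℝ N y‖ * ‖φ σ‖) :=
          mul_le_mul_of_nonneg_left ((fderiv ℝ N y).le_opNorm _) (abs_nonneg t)
      _ ≤ |t| * (C * ‖φ σ‖) := by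
          have hC' := hC σ hσ'
          exact mul_le_mul_of_nonneg_left
            (mul_le_mul_of_nonneg_right hC' (norm_nonneg (φ σ))) (abs_nonneg t)
      _ = (|t| * C) * ‖φ σ‖ := by ring
  -- Gronwall
  have hcont : ContinuousOn φ (Icc (0:ℝ) 1) := fun σ hσ =>
    (hderiv σ hσ).continuousAt.continuousWithinAt
  have hφ0 : ‖φ 0‖ ≤ 0 := by simp [hφ]
  have hg := norm_le_gronwallBound_of_norm_deriv_right_le hcont
    (fun σ hσ => (hderiv σ ⟨hσ.1, le_of_lt hσ.2⟩).hasDerivWithinAt) hφ0 key 1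
    (by norm_num)
  rw [gronwallBound_ε0_δ0] at hg
  have h1 : φ 1 = 0 := norm_le_zero_iff.mp hg
  have h2 : N (x + (1 * t) • N x) - N x = 0 := h1
  rw [one_mul] at h2
  exact sub_eq_zero.mp h2
end

section
/- Let Ω ⊆ ℝⁿ be open, let S ⊆ Ω, and let ν : S → ℝⁿ be a map with ‖ν(x)‖ = 1 for x ∈ S. Suppose every point y ∈ Ω can be written as y = x + t ν(x) for some x ∈ S and t ∈ ℝ such that the segment {x + s ν(x) : s between 0 and t} is contained in Ω. If N₁, N₂ : Ω → ℝⁿ are both continuously differentiable, satisfy ‖Nᵢ(y)‖ = 1 and ∂_j (Nᵢ)_k(y) = ∂_k (Nᵢ)_j(y) for all y ∈ Ω and all j, k, and Nᵢ(x) = ν(x) for all x ∈ S (i = 1, 2), then N₁(y) = N₂(y) for all y ∈ Ω; in fact Nᵢ(x + tν(x)) = ν(x). -/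
open Set RealInnerProductSpace


theorem seg_aux {n : ℕ}
    (Ω : Set (EuclideanSpace ℝ (Fin n))) (hΩ : IsOpen Ω)
    (N : EuclideanSpace ℝ (Fin n) → EuclideanSpace ℝ (Fin n))
    (hN : ContDiffOn ℝ 1 N Ω)
    (hunit : ∀ y ∈ Ω, ‖N y‖ = 1)
    (hsym : ∀ y ∈ Ω, ∀ j k : Fin n,
      pder (fun z => N z j) k y = pder (fun z => N z k) j y)
    (x v : EuclideanSpace ℝ (Fin n)) (hNx : N x = v)
    (t : ℝ) (ht : ∀ s ∈ Set.uIcc (0 : ℝ) t, x + s • v ∈ Ω) :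
    N (x + t • v) = v := by
  have hx : x ∈ Ω := by
    have := ht 0 (Set.left_mem_uIcc)
    simpa using this
  have hdiff : ∀ y ∈ Ω, DifferentiableAt ℝ N y := fun y hy =>
    (hN.contDiffAt (hΩ.mem_nhds hy)).differentiableAt one_ne_zero
  -- Step A : ⟪D u, N y⟫ = 0
  have hA : ∀ y ∈ Ω, ∀ u, ⟪fderiv ℝ N y u, N y⟫ = 0 := by
    intro y hy u
    have h1 : HasFDerivAt N (fderiv ℝ N y) y := (hdiff y hy).hasFDerivAt
    have h2 := h1.inner ℝ h1
    have h3 : (fun z => ⟪N z, N z⟫) =ᶠ[nhds y] fun _ => 1 := by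
      filter_upwards [hΩ.mem_nhds hy] with z hz
      rw [real_inner_self_eq_norm_mul_norm, hunit z hz]; norm_num
    have h4 : HasFDerivAt (fun z => ⟪N z, N z⟫) (0 : _ →L[ℝ] ℝ) y :=
      (hasFDerivAt_const (1 : ℝ) y).congr_of_eventuallyEq h3
    have h5 := h2.unique h4
    have h6 := congrArg (fun L => L u) h5
    simp only [ContinuousLinearMap.comp_apply, ContinuousLinearMap.prod_apply,
      fderivInnerCLM_apply, ContinuousLinearMap.zero_apply] at h6
    have := real_inner_comm (N y) (fderiv ℝ N y u)
    linarith [h6, this]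
  -- coordinates of fderiv
  have hproj : ∀ y ∈ Ω, ∀ (j : Fin n) (u : EuclideanSpace ℝ (Fin n)),
      fderiv ℝ (fun z => N z j) y u = (fderiv ℝ N y u) j := by
    intro y hy j u
    have h1 := ((EuclideanSpace.proj j (𝕜 := ℝ)).hasFDerivAt.comp y
      (hdiff y hy).hasFDerivAt).fderiv
    have h2 : (fun z => N z j) = fun z => (EuclideanSpace.proj (𝕜 := ℝ) j) (N z) := rfl
    rw [h2]
    rw [show (fun z => (EuclideanSpace.proj (𝕜 := ℝ) j) (N z))
        = (EuclideanSpace.proj (𝕜 := ℝ) j) ∘ N from rfl, h1]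
    rfl
  have hco : ∀ y ∈ Ω, ∀ j k : Fin n,
      (fderiv ℝ N y (EuclideanSpace.single k 1)) j
        = (fderiv ℝ N y (EuclideanSpace.single j 1)) k := by
    intro y hy j k
    have h1 := hsym y hy j k
    unfold pder at h1
    rw [hproj y hy j, hproj y hy k] at h1
    exact h1
  -- decomposition
  have hrep : ∀ u : EuclideanSpace ℝ (Fin n),
      u = ∑ k, u k • (EuclideanSpace.single k 1 : EuclideanSpace ℝ (Fin n)) := by
    intro u
    have := (EuclideanSpace.basisFun (Fin n) ℝ).sum_repr u
    simp only [EuclideanSpace.basisFun_apply, EuclideanSpace.basisFun_repr] at this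
    exact this.symm
  -- symmetry of bilinear form
  have hsymB : ∀ y ∈ Ω, ∀ u w : EuclideanSpace ℝ (Fin n),
      ⟪fderiv ℝ N y u, w⟫ = ⟪fderiv ℝ N y w, u⟫ := by
    intro y hy u w
    have expand : ∀ a b : EuclideanSpace ℝ (Fin n),
        ⟪fderiv ℝ N y a, b⟫
          = ∑ k, ∑ i, a k * ((fderiv ℝ N y (EuclideanSpace.single k 1)) i * b i) := by
      intro a b
      conv_lhs => rw [hrep a]
      rw [map_sum, sum_inner]
      refine Finset.sum_congr rfl fun k _ => ?_
      rw [ContinuousLinearMap.map_smul, real_inner_smul_left, PiLp.inner_apply]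
      rw [Finset.mul_sum]
      refine Finset.sum_congr rfl fun i _ => ?_
      simp only [RCLike.inner_apply, starRingEnd_apply, star_trivial]
      ring
    rw [expand, expand]
    rw [Finset.sum_comm]
    refine Finset.sum_congr rfl fun i _ => Finset.sum_congr rfl fun k _ => ?_
    rw [hco y hy i k]
    ring
  -- Step B : D (N y) = 0
  have hB : ∀ y ∈ Ω, fderiv ℝ N y (N y) = 0 := by
    intro y hy
    have h1 : ⟪fderiv ℝ N y (N y), fderiv ℝ N y (N y)⟫ = 0 := by
      rw [hsymB y hy (N y) (fderiv ℝ N y (N y))]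
      exact hA y hy _
    exact inner_self_eq_zero.mp h1
  -- Step C : Gronwall along the segment
  have main : ∀ (c : EuclideanSpace ℝ (Fin n)) (T : ℝ), 0 ≤ T → (c = v ∨ c = -v) →
      (∀ s ∈ Icc (0 : ℝ) T, x + s • c ∈ Ω) → N (x + T • c) = v := by
    intro c T hT hc hseg
    set w : ℝ → EuclideanSpace ℝ (Fin n) := fun s => N (x + s • c) - v with hw
    -- continuity of fderiv and bound K
    have hfd : ContinuousOn (fderiv ℝ N) Ω := hN.continuousOn_fderiv_of_isOpen hΩ le_rfl
    have hγcont : Continuous (fun s : ℝ => x + s • c) :=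
      continuous_const.add (continuous_id.smul continuous_const)
    have hKcont : ContinuousOn (fun s : ℝ => ‖fderiv ℝ N (x + s • c)‖) (Icc 0 T) :=
      ((hfd.comp hγcont.continuousOn hseg).norm)
    obtain ⟨s₀, hs₀, hK'⟩ := isCompact_Icc.exists_isMaxOn ⟨0, left_mem_Icc.2 hT⟩ hKcont
    have hK : ∀ s ∈ Icc (0:ℝ) T, ‖fderiv ℝ N (x + s • c)‖ ≤ ‖fderiv ℝ N (x + s₀ • c)‖ :=
      fun s hs => hK' hs
    set K := ‖fderiv ℝ N (x + s₀ • c)‖ with hKdef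
    -- continuity of w
    have hwcont : ContinuousOn w (Icc 0 T) :=
      ((hN.continuousOn.comp hγcont.continuousOn hseg).sub continuousOn_const)
    -- derivative of w
    have hderiv : ∀ s ∈ Ico (0 : ℝ) T,
        HasDerivWithinAt w (fderiv ℝ N (x + s • c) c) (Ici s) s := by
      intro s hs
      have hsΩ : x + s • c ∈ Ω := hseg s (Ico_subset_Icc_self hs)
      have hγ : HasDerivAt (fun s : ℝ => x + s • c) c s := by
        simpa using ((hasDerivAt_id s).smul_const c).const_add x
      have hNd : HasFDerivAt N (fderiv ℝ N (x + s • c)) (x + s • c) :=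
        (hdiff _ hsΩ).hasFDerivAt
      have := (hNd.comp_hasDerivAt s hγ).sub_const v
      exact this.hasDerivWithinAt
    -- bound
    have hbound : ∀ s ∈ Ico (0 : ℝ) T,
        ‖fderiv ℝ N (x + s • c) c‖ ≤ K * ‖w s‖ + 0 := by
      intro s hs
      have hsΩ : x + s • c ∈ Ω := hseg s (Ico_subset_Icc_self hs)
      have hzero := hB _ hsΩ
      have h1 : fderiv ℝ N (x + s • c) (w s) = - fderiv ℝ N (x + s • c) v := by
        show fderiv ℝ N (x + s • c) (N (x + s • c) - v) = _
        rw [map_sub, hzero, zero_sub]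
      have h2 : ‖fderiv ℝ N (x + s • c) c‖ = ‖fderiv ℝ N (x + s • c) v‖ := by
        rcases hc with hc | hc
        · rw [hc]
        · rw [hc, map_neg, norm_neg]
      have hkey : ‖fderiv ℝ N (x + s • c) c‖ = ‖fderiv ℝ N (x + s • c) (w s)‖ := by
        rw [h2, h1, norm_neg]
      rw [hkey, add_zero]
      calc ‖fderiv ℝ N (x + s • c) (w s)‖
          ≤ ‖fderiv ℝ N (x + s • c)‖ * ‖w s‖ := (fderiv ℝ N (x + s • c)).le_opNorm _
        _ ≤ K * ‖w s‖ := by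
            apply mul_le_mul_of_nonneg_right (hK s (Ico_subset_Icc_self hs)) (norm_nonneg _)
    have hw0 : ‖w 0‖ ≤ 0 := by
      simp only [hw]
      simp [hNx]
    have := norm_le_gronwallBound_of_norm_deriv_right_le hwcont hderiv hw0 hbound
      T (right_mem_Icc.2 hT)
    rw [gronwallBound_ε0] at this
    simp only [zero_mul] at this
    have hwT : w T = 0 := by
      have := le_antisymm this (norm_nonneg _)
      exact norm_eq_zero.mp this
    have hfin : N (x + T • c) - v = 0 := hwT
    have := sub_eq_zero.mp hfin
    exact this
  rcases le_or_gt 0 t with h | h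
  · have hseg : ∀ s ∈ Icc (0 : ℝ) t, x + s • v ∈ Ω := by
      intro s hs
      exact ht s (by rwa [Set.uIcc_of_le h])
    exact main v t h (Or.inl rfl) hseg
  · have hseg : ∀ s ∈ Icc (0 : ℝ) (-t), x + s • (-v) ∈ Ω := by
      intro s hs
      have : x + s • (-v) = x + (-s) • v := by
        rw [smul_neg, neg_smul]
      rw [this]
      apply ht
      rw [Set.uIcc_of_ge h.le]
      constructor <;> [linarith [hs.2]; linarith [hs.1]]
    have := main (-v) (-t) (by linarith) (Or.inr rfl) hseg
    rw [show x + (-t) • (-v) = x + t • v by rw [smul_neg, neg_smul, neg_neg]] at this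
    exact this

/-- Uniqueness of a proper extension: if the open set `Ω` is covered by the normal
segments emanating from `S`, then any two proper extensions `N₁, N₂` of a unit field `ν`
given on `S` coincide on `Ω`; in fact `Nᵢ(x + tν(x)) = ν(x)`. -/
theorem proper_extension_unique {n : ℕ}
    (Ω S : Set (EuclideanSpace ℝ (Fin n))) (hΩ : IsOpen Ω) (hSΩ : S ⊆ Ω)
    (ν : EuclideanSpace ℝ (Fin n) → EuclideanSpace ℝ (Fin n))
    (hν : ∀ x ∈ S, ‖ν x‖ = 1)
    (hcover : ∀ y ∈ Ω, ∃ x ∈ S, ∃ t : ℝ, y = x + t • ν x ∧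
      ∀ s ∈ Set.uIcc (0 : ℝ) t, x + s • ν x ∈ Ω)
    (N₁ N₂ : EuclideanSpace ℝ (Fin n) → EuclideanSpace ℝ (Fin n))
    (hN₁ : ContDiffOn ℝ 1 N₁ Ω) (hN₂ : ContDiffOn ℝ 1 N₂ Ω)
    (hunit₁ : ∀ y ∈ Ω, ‖N₁ y‖ = 1) (hunit₂ : ∀ y ∈ Ω, ‖N₂ y‖ = 1)
    (hsym₁ : ∀ y ∈ Ω, ∀ j k : Fin n,
      pder (fun z => N₁ z j) k y = pder (fun z => N₁ z k) j y)
    (hsym₂ : ∀ y ∈ Ω, ∀ j k : Fin n,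
      pder (fun z => N₂ z j) k y = pder (fun z => N₂ z k) j y)
    (hext₁ : ∀ x ∈ S, N₁ x = ν x) (hext₂ : ∀ x ∈ S, N₂ x = ν x) :
    (∀ y ∈ Ω, N₁ y = N₂ y) ∧
    (∀ x ∈ S, ∀ t : ℝ, (∀ s ∈ Set.uIcc (0 : ℝ) t, x + s • ν x ∈ Ω) →
      N₁ (x + t • ν x) = ν x ∧ N₂ (x + t • ν x) = ν x) := by
  have key₁ : ∀ x ∈ S, ∀ t : ℝ, (∀ s ∈ Set.uIcc (0 : ℝ) t, x + s • ν x ∈ Ω) →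
      N₁ (x + t • ν x) = ν x := fun x hx t ht =>
    seg_aux Ω hΩ N₁ hN₁ hunit₁ hsym₁ x (ν x) (hext₁ x hx) t ht
  have key₂ : ∀ x ∈ S, ∀ t : ℝ, (∀ s ∈ Set.uIcc (0 : ℝ) t, x + s • ν x ∈ Ω) →
      N₂ (x + t • ν x) = ν x := fun x hx t ht =>
    seg_aux Ω hΩ N₂ hN₂ hunit₂ hsym₂ x (ν x) (hext₂ x hx) t ht
  refine ⟨?_, fun x hx t ht => ⟨key₁ x hx t ht, key₂ x hx t ht⟩⟩
  intro y hy
  obtain ⟨x, hx, t, hyt, hseg⟩ := hcover y hy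
  rw [hyt, key₁ x hx t hseg, key₂ x hx t hseg]
end

section
/- Let Ω ⊆ ℝⁿ be open, let S ⊆ Ω, and let ν : S → ℝⁿ satisfy ‖ν(x)‖ = 1 for x ∈ S. Suppose every point y ∈ Ω can be written as y = x + t ν(x) for some x ∈ S and t ∈ ℝ such that the segment {x + s ν(x) : s between 0 and t} is contained in Ω. If Φ₁, Φ₂ : Ω → ℝ are twice continuously differentiable, satisfy ‖∇Φᵢ(y)‖ = 1 for all y ∈ Ω, Φᵢ(x) = 0 and ∇Φᵢ(x) = ν(x) for all x ∈ S (i = 1, 2), then Φ₁ = Φ₂ on Ω; in fact Φᵢ(x + tν(x)) = t for every such representation. -/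
open Set InnerProductSpace

local notation "⟪" x ", " y "⟫" => @inner ℝ _ _ x y

variable {E : Type*} [NormedAddCommGroup E] [InnerProductSpace ℝ E] [CompleteSpace E]

lemma eikonal_core {Ω : Set E} (hΩ : IsOpen Ω)
    {Φ : E → ℝ} (hΦ : ContDiffOn ℝ 2 Φ Ω)
    (heik : ∀ y ∈ Ω, ‖gradient Φ y‖ = 1)
    {x : E} (hx : x ∈ Ω) {σ : ℝ} (hσ : σ = 1 ∨ σ = -1)
    {c : ℝ} (hc : 0 ≤ c)
    (hseg : ∀ s ∈ Set.Icc (0:ℝ) c, x + (σ * s) • gradient Φ x ∈ Ω) :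
    Φ (x + (σ * c) • gradient Φ x) = Φ x + σ * c := by
  classical
  set G : E → E := fun y => gradient Φ y with hGdef
  have hGeq : G = ((toDual ℝ E).symm : (E →L[ℝ] ℝ) → E) ∘ fderiv ℝ Φ := rfl
  have hΦ' : ContDiffOn ℝ 1 (fderiv ℝ Φ) Ω := hΦ.fderiv_of_isOpen (m := 1) hΩ (by norm_num)
  have hG1 : ContDiffOn ℝ 1 G Ω := by
    rw [hGeq]
    exact ((toDual ℝ E).symm.contDiff).comp_contDiffOn hΦ'
  have hGdiff : ∀ y ∈ Ω, HasFDerivAt G (fderiv ℝ G y) y := fun y hy =>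
    (((hG1.differentiableOn one_ne_zero) y hy).differentiableAt (hΩ.mem_nhds hy)).hasFDerivAt
  set B : E → E →L[ℝ] E := fun y => fderiv ℝ G y with hBdef
  -- gradient pairing
  have hpair : ∀ y : E, ∀ w : E, ⟪G y, w⟫ = fderiv ℝ Φ y w := by
    intro y w
    simp [hGeq, toDual_symm_apply]
  -- derivative of eikonal equation: second slot orthogonality
  have hBperp : ∀ y ∈ Ω, ∀ w : E, ⟪B y w, G y⟫ = 0 := by
    intro y hy w
    have hGy := hGdiff y hy
    have h1 : HasFDerivAt (fun z => ⟪G z, G z⟫)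
        ((fderivInnerCLM ℝ (G y, G y)).comp ((B y).prod (B y))) y := hGy.inner ℝ hGy
    have h2 : HasFDerivAt (fun z => ⟪G z, G z⟫) (0 : E →L[ℝ] ℝ) y := by
      have hev : (fun z => ⟪G z, G z⟫) =ᶠ[nhds y] (fun _ => (1 : ℝ)) := by
        filter_upwards [hΩ.mem_nhds hy] with z hz
        have := heik z hz
        rw [real_inner_self_eq_norm_sq, this]; norm_num
      exact (hasFDerivAt_const (1 : ℝ) y).congr_of_eventuallyEq hev
    have := h1.unique h2
    have happ := DFunLike.congr_fun this w
    simp only [ContinuousLinearMap.comp_apply, ContinuousLinearMap.prod_apply,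
      fderivInnerCLM_apply, ContinuousLinearMap.zero_apply] at happ
    have hc2 := real_inner_comm (G y) (B y w)
    linarith
  -- symmetry of the second derivative
  have hsym : ∀ y ∈ Ω, ∀ v w : E, ⟪B y v, w⟫ = ⟪B y w, v⟫ := by
    intro y hy v w
    have hA : HasFDerivAt (fderiv ℝ Φ) (fderiv ℝ (fderiv ℝ Φ) y) y :=
      (((hΦ'.differentiableOn one_ne_zero) y hy).differentiableAt (hΩ.mem_nhds hy)).hasFDerivAt
    have hf : ∀ᶠ z in nhds y, HasFDerivAt Φ (fderiv ℝ Φ z) z := by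
      filter_upwards [hΩ.mem_nhds hy] with z hz
      exact (((hΦ.differentiableOn (by norm_num)) z hz).differentiableAt
        (hΩ.mem_nhds hz)).hasFDerivAt
    have hsymA := second_derivative_symmetric_of_eventually hf hA v w
    set A := fderiv ℝ (fderiv ℝ Φ) y with hAdef
    have key : ∀ u : E, ⟪B y u, w⟫ = A u w ∧ ⟪B y u, v⟫ = A u v := by
      have main : ∀ z : E, ∀ u : E, ⟪B y u, z⟫ = A u z := by
        intro z u
        have hGy := hGdiff y hy
        have h1 : HasFDerivAt (fun q => ⟪G q, z⟫)
            ((fderivInnerCLM ℝ (G y, z)).comp ((B y).prod (0 : E →L[ℝ] E))) y :=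
          hGy.inner ℝ (hasFDerivAt_const z y)
        have h2 : HasFDerivAt (fun q => (fderiv ℝ Φ q) z)
            ((ContinuousLinearMap.apply ℝ ℝ z).comp A) y :=
          (ContinuousLinearMap.apply ℝ ℝ z).hasFDerivAt.comp y hA
        have hfun : (fun q => ⟪G q, z⟫) = (fun q => (fderiv ℝ Φ q) z) := by
          funext q; exact hpair q z
        rw [hfun] at h1
        have := h1.unique h2
        have happ := DFunLike.congr_fun this u
        simpa [fderivInnerCLM_apply] using happ
      exact fun u => ⟨main w u, main v u⟩
    rw [(key v).1, (key w).2, hsymA]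
  -- the gradient is annihilated by the second derivative
  have hBG0 : ∀ y ∈ Ω, B y (G y) = 0 := by
    intro y hy
    have h0 : ∀ w : E, ⟪B y (G y), w⟫ = 0 := fun w =>
      (hsym y hy (G y) w).trans (hBperp y hy w)
    have := h0 (B y (G y))
    rwa [inner_self_eq_zero] at this
  set v : E := gradient Φ x with hvdef
  have hv1 : ‖v‖ = 1 := heik x hx
  set γ : ℝ → E := fun s => x + (σ * s) • v with hγdef
  have hγ0 : γ 0 = x := by simp [hγdef]
  have hγΩ : ∀ s ∈ Icc (0:ℝ) c, γ s ∈ Ω := hseg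
  have hγd : ∀ s : ℝ, HasDerivAt γ (σ • v) s := by
    intro s
    have h1 : HasDerivAt (fun s : ℝ => σ * s) σ s := by
      simpa using (hasDerivAt_id s).const_mul σ
    have h2 : HasDerivAt (fun s : ℝ => (σ * s) • v) (σ • v) s := h1.smul_const v
    simpa [hγdef] using h2.const_add x
  have hγcont : ContinuousOn γ (Icc 0 c) := by
    have : Continuous γ := by fun_prop
    exact this.continuousOn
  -- bound on the Hessian along the segment
  have hBcont : ContinuousOn B Ω := hG1.continuousOn_fderiv_of_isOpen hΩ le_rfl
  obtain ⟨K, hK⟩ : ∃ K : ℝ, ∀ s ∈ Icc (0:ℝ) c, ‖B (γ s)‖ ≤ K :=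
    (isCompact_Icc).exists_bound_of_continuousOn (hBcont.comp hγcont hγΩ)
  -- Gronwall: the gradient is constant along the segment
  set f : ℝ → E := fun s => G (γ s) - v with hfdef
  have hf0 : f 0 = 0 := by simp [hfdef, hγ0, hvdef, hGdef]
  have hfd : ∀ s ∈ Icc (0:ℝ) c, HasDerivAt f (-(σ • B (γ s) (f s))) s := by
    intro s hs
    have hGy := hGdiff (γ s) (hγΩ s hs)
    have h1 : HasDerivAt (fun t => G (γ t)) (B (γ s) (σ • v)) s := hGy.comp_hasDerivAt s (hγd s)
    have h2 : B (γ s) (σ • v) = -(σ • B (γ s) (f s)) := by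
      have hveq : v = G (γ s) - f s := by simp [hfdef]
      rw [map_smul]
      rw [show B (γ s) v = B (γ s) (G (γ s)) - B (γ s) (f s) by
        rw [hveq, map_sub]]
      rw [hBG0 (γ s) (hγΩ s hs)]
      simp [smul_sub]
    rw [h2] at h1
    simpa [hfdef] using h1.sub_const v
  have hfcont : ContinuousOn f (Icc 0 c) := by
    have : ContinuousOn (fun s => G (γ s)) (Icc 0 c) := (hG1.continuousOn).comp hγcont hγΩ
    exact this.sub continuousOn_const
  have habs : σ • (1:ℝ) = σ := by simp
  have hσabs : |σ| = 1 := by rcases hσ with h | h <;> simp [h]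
  have hgron : ∀ s ∈ Icc (0:ℝ) c, ‖f s‖ ≤ gronwallBound 0 K 0 (s - 0) := by
    apply norm_le_gronwallBound_of_norm_deriv_right_le hfcont
    · intro s hs
      exact (hfd s (Ico_subset_Icc_self hs)).hasDerivWithinAt
    · simp [hf0]
    · intro s hs
      have hsIcc := Ico_subset_Icc_self hs
      have h1 : ‖-(σ • B (γ s) (f s))‖ = ‖B (γ s) (f s)‖ := by
        rw [norm_neg, norm_smul, Real.norm_eq_abs, hσabs, one_mul]
      rw [h1]
      calc ‖B (γ s) (f s)‖ ≤ ‖B (γ s)‖ * ‖f s‖ := (B (γ s)).le_opNorm _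
        _ ≤ K * ‖f s‖ + 0 := by
            rw [add_zero]
            exact mul_le_mul_of_nonneg_right (hK s hsIcc) (norm_nonneg _)
  have hGconst : ∀ s ∈ Icc (0:ℝ) c, G (γ s) = v := by
    intro s hs
    have := hgron s hs
    rw [gronwallBound_ε0_δ0] at this
    have : ‖f s‖ = 0 := le_antisymm this (norm_nonneg _)
    have : f s = 0 := norm_eq_zero.mp this
    have := sub_eq_zero.mp this
    exact this
  -- integrate along the segment
  set ψ : ℝ → ℝ := fun s => Φ (γ s) - σ * s with hψdef
  have hψd : ∀ s ∈ Icc (0:ℝ) c, HasDerivAt ψ 0 s := by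
    intro s hs
    have hΦd : HasFDerivAt Φ (fderiv ℝ Φ (γ s)) (γ s) :=
      (((hΦ.differentiableOn (by norm_num)) (γ s) (hγΩ s hs)).differentiableAt
        (hΩ.mem_nhds (hγΩ s hs))).hasFDerivAt
    have h1 : HasDerivAt (fun t => Φ (γ t)) (fderiv ℝ Φ (γ s) (σ • v)) s :=
      hΦd.comp_hasDerivAt s (hγd s)
    have h2 : fderiv ℝ Φ (γ s) (σ • v) = σ := by
      rw [← hpair (γ s) (σ • v), hGconst s hs, real_inner_smul_right,
        real_inner_self_eq_norm_sq, hv1]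
      ring
    rw [h2] at h1
    have := h1.sub ((hasDerivAt_id s).const_mul σ)
    simpa [hψdef, Pi.sub_def] using this
  have hψc : ContinuousOn ψ (Icc 0 c) := by
    have h1 : ContinuousOn (fun s => Φ (γ s)) (Icc 0 c) := (hΦ.continuousOn).comp hγcont hγΩ
    exact h1.sub (continuousOn_const.mul continuousOn_id)
  have hconst : ψ c = ψ 0 :=
    constant_of_has_deriv_right_zero hψc
      (fun s hs => (hψd s (Ico_subset_Icc_self hs)).hasDerivWithinAt)
      c (right_mem_Icc.mpr hc)
  have : Φ (γ c) - σ * c = Φ x - σ * 0 := by simpa [hψdef, hγ0] using hconst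
  have := this
  simp only [mul_zero, sub_zero] at this
  linarith [this]

/-- Uniqueness for the eikonal boundary value problem: if the open set `Ω` is covered by
the normal segments emanating from `S` and `Φ₁, Φ₂` are `C²` solutions of `‖∇Φ‖ = 1`
with `Φᵢ = 0` and `∇Φᵢ = ν` on `S`, then `Φ₁ = Φ₂` on `Ω`; in fact
`Φᵢ(x + tν(x)) = t` for every such normal representation. -/
theorem eikonal_bvp_unique {n : ℕ}
    (Ω S : Set (EuclideanSpace ℝ (Fin n))) (hΩ : IsOpen Ω) (hSΩ : S ⊆ Ω)
    (ν : EuclideanSpace ℝ (Fin n) → EuclideanSpace ℝ (Fin n))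
    (hν : ∀ x ∈ S, ‖ν x‖ = 1)
    (hcover : ∀ y ∈ Ω, ∃ x ∈ S, ∃ t : ℝ, y = x + t • ν x ∧
      ∀ s ∈ Set.uIcc (0 : ℝ) t, x + s • ν x ∈ Ω)
    (Φ₁ Φ₂ : EuclideanSpace ℝ (Fin n) → ℝ)
    (hΦ₁ : ContDiffOn ℝ 2 Φ₁ Ω) (hΦ₂ : ContDiffOn ℝ 2 Φ₂ Ω)
    (heik₁ : ∀ y ∈ Ω, ‖gradient Φ₁ y‖ = 1) (heik₂ : ∀ y ∈ Ω, ‖gradient Φ₂ y‖ = 1)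
    (hzero₁ : ∀ x ∈ S, Φ₁ x = 0) (hzero₂ : ∀ x ∈ S, Φ₂ x = 0)
    (hgrad₁ : ∀ x ∈ S, gradient Φ₁ x = ν x) (hgrad₂ : ∀ x ∈ S, gradient Φ₂ x = ν x) :
    (∀ y ∈ Ω, Φ₁ y = Φ₂ y) ∧
    (∀ x ∈ S, ∀ t : ℝ, (∀ s ∈ Set.uIcc (0 : ℝ) t, x + s • ν x ∈ Ω) →
      Φ₁ (x + t • ν x) = t ∧ Φ₂ (x + t • ν x) = t) := by
  have key : ∀ Φ : EuclideanSpace ℝ (Fin n) → ℝ, ContDiffOn ℝ 2 Φ Ω →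
      (∀ y ∈ Ω, ‖gradient Φ y‖ = 1) → (∀ x ∈ S, Φ x = 0) →
      (∀ x ∈ S, gradient Φ x = ν x) →
      ∀ x ∈ S, ∀ t : ℝ, (∀ s ∈ Set.uIcc (0 : ℝ) t, x + s • ν x ∈ Ω) →
        Φ (x + t • ν x) = t := by
    intro Φ hΦ heik hzero hgrad x hxS t hseg
    set σ : ℝ := if 0 ≤ t then 1 else -1 with hσdef
    have hσ : σ = 1 ∨ σ = -1 := by
      rw [hσdef]; split_ifs <;> simp
    have hσc : σ * |t| = t := by
      rw [hσdef]; rcases le_or_gt 0 t with h | h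
      · rw [if_pos h, abs_of_nonneg h, one_mul]
      · rw [if_neg (not_le.mpr h), abs_of_neg h]; ring
    have hmem : ∀ s ∈ Set.Icc (0:ℝ) |t|, x + (σ * s) • gradient Φ x ∈ Ω := by
      intro s hs
      rw [hgrad x hxS]
      apply hseg
      rw [hσdef]
      rcases le_or_gt 0 t with h | h
      · rw [Set.uIcc_of_le h, if_pos h, one_mul]
        exact ⟨hs.1, hs.2.trans_eq (abs_of_nonneg h)⟩
      · rw [Set.uIcc_of_ge h.le, if_neg (not_le.mpr h)]
        constructor
        · have := hs.2
          rw [abs_of_neg h] at this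
          linarith
        · linarith [hs.1]
    have := eikonal_core hΩ hΦ heik (hSΩ hxS) hσ (abs_nonneg t) hmem
    rw [hgrad x hxS, hσc, hzero x hxS, zero_add] at this
    exact this
  have k₁ := key Φ₁ hΦ₁ heik₁ hzero₁ hgrad₁
  have k₂ := key Φ₂ hΦ₂ heik₂ hzero₂ hgrad₂
  constructor
  · intro y hy
    obtain ⟨x, hxS, t, hyeq, hseg⟩ := hcover y hy
    rw [hyeq, k₁ x hxS t hseg, k₂ x hxS t hseg]
  · intro x hxS t hseg
    exact ⟨k₁ x hxS t hseg, k₂ x hxS t hseg⟩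
end

section
/- Let N : ℝ² \ {0} → ℝ² be defined by N(x₁, x₂) = (x₁, 2x₂)/√(x₁² + 4x₂²), i.e. N is the normalized gradient ∇Ψ/‖∇Ψ‖ of Ψ(x₁, x₂) = x₁² + 2x₂² − 1, whose zero set is an ellipse. Then ∂₁N₂(x) = −2x₂x₁/(x₁² + 4x₂²)^{3/2} and ∂₂N₁(x) = −4x₁x₂/(x₁² + 4x₂²)^{3/2}; consequently ∂₁N₂(x) ≠ ∂₂N₁(x) whenever x₁ ≠ 0 and x₂ ≠ 0. In particular, the normalized gradient extension of the unit normal field of the ellipse is not a proper extension. -/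
private lemma aux_pos {x : EuclideanSpace ℝ (Fin 2)} (hx : x ≠ 0) :
    0 < x 0 * x 0 + 4 * (x 1 * x 1) := by
  rcases eq_or_ne (x 0) 0 with h0 | h0
  · rcases eq_or_ne (x 1) 0 with h1 | h1
    · exact absurd (by ext i; fin_cases i <;> simp [h0, h1]) hx
    · nlinarith [mul_self_nonneg (x 0), mul_self_pos.2 h1]
  · nlinarith [mul_self_nonneg (x 1), mul_self_pos.2 h0]

private lemma aux_proj0 (x : EuclideanSpace ℝ (Fin 2)) :
    HasFDerivAt (fun y : EuclideanSpace ℝ (Fin 2) => y 0)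
      (EuclideanSpace.proj 0 : EuclideanSpace ℝ (Fin 2) →L[ℝ] ℝ) x := by
  have := (EuclideanSpace.proj (0:Fin 2) : EuclideanSpace ℝ (Fin 2) →L[ℝ] ℝ).hasFDerivAt (x := x)
  exact this

private lemma aux_proj1 (x : EuclideanSpace ℝ (Fin 2)) :
    HasFDerivAt (fun y : EuclideanSpace ℝ (Fin 2) => y 1)
      (EuclideanSpace.proj 1 : EuclideanSpace ℝ (Fin 2) →L[ℝ] ℝ) x := by
  have := (EuclideanSpace.proj (1:Fin 2) : EuclideanSpace ℝ (Fin 2) →L[ℝ] ℝ).hasFDerivAt (x := x)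
  exact this

private lemma aux_grad (Ψ : EuclideanSpace ℝ (Fin 2) → ℝ)
    (hΨ : ∀ x : EuclideanSpace ℝ (Fin 2), Ψ x = (x 0) ^ 2 + 2 * (x 1) ^ 2 - 1)
    (x : EuclideanSpace ℝ (Fin 2)) :
    gradient Ψ x = EuclideanSpace.single 0 (2 * x 0) + EuclideanSpace.single 1 (4 * x 1) := by
  set g : EuclideanSpace ℝ (Fin 2) :=
    EuclideanSpace.single 0 (2 * x 0) + EuclideanSpace.single 1 (4 * x 1) with hg
  have h0 := aux_proj0 x
  have h1 := aux_proj1 x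
  have hL : HasFDerivAt Ψ
      ((x 0 • (EuclideanSpace.proj 0 : EuclideanSpace ℝ (Fin 2) →L[ℝ] ℝ)
        + x 0 • EuclideanSpace.proj 0
        + (2:ℝ) • (x 1 • (EuclideanSpace.proj 1 : EuclideanSpace ℝ (Fin 2) →L[ℝ] ℝ)
            + x 1 • EuclideanSpace.proj 1))) x := by
    have : Ψ = fun y : EuclideanSpace ℝ (Fin 2) => (y 0 * y 0 + 2 * (y 1 * y 1)) - 1 := by
      funext y; rw [hΨ y]; ring
    rw [this]
    exact (((h0.mul h0).add ((h1.mul h1).const_mul 2)).sub_const 1)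
  have hgrad : HasGradientAt Ψ g x := by
    rw [hasGradientAt_iff_hasFDerivAt]
    refine hL.congr_fderiv ?_
    ext v
    simp [hg, InnerProductSpace.toDual_apply_apply, PiLp.inner_apply, Fin.sum_univ_two,
      RCLike.inner_apply, EuclideanSpace.single_apply, PiLp.proj_apply]
    ring
  exact hgrad.gradient

private lemma aux_deriv (x : EuclideanSpace ℝ (Fin 2)) (hx : x ≠ 0)
    (N : EuclideanSpace ℝ (Fin 2) → EuclideanSpace ℝ (Fin 2))
    (hN : ∀ x : EuclideanSpace ℝ (Fin 2),
      N x 0 = x 0 / Real.sqrt ((x 0) ^ 2 + 4 * (x 1) ^ 2) ∧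
      N x 1 = 2 * x 1 / Real.sqrt ((x 0) ^ 2 + 4 * (x 1) ^ 2)) :
      fderiv ℝ (fun y => N y 1) x (EuclideanSpace.single 0 1)
        = -(2 * x 1 * x 0) / ((x 0) ^ 2 + 4 * (x 1) ^ 2) ^ ((3 : ℝ) / 2) ∧
      fderiv ℝ (fun y => N y 0) x (EuclideanSpace.single 1 1)
        = -(4 * x 0 * x 1) / ((x 0) ^ 2 + 4 * (x 1) ^ 2) ^ ((3 : ℝ) / 2) := by
  have hu : 0 < x 0 * x 0 + 4 * (x 1 * x 1) := aux_pos hx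
  set u : ℝ := x 0 * x 0 + 4 * (x 1 * x 1) with hu_def
  have hsu : Real.sqrt u ≠ 0 := by positivity
  have hsu2 : Real.sqrt u * Real.sqrt u = u := Real.mul_self_sqrt hu.le
  have h0 := aux_proj0 x
  have h1 := aux_proj1 x
  have hq : HasFDerivAt (fun y : EuclideanSpace ℝ (Fin 2) => y 0 * y 0 + 4 * (y 1 * y 1)) _ x :=
    (h0.mul h0).add ((h1.mul h1).const_mul 4)
  have hs := (Real.hasDerivAt_sqrt hu.ne').comp_hasFDerivAt x hq
  have hinv := (hasDerivAt_inv hsu).comp_hasFDerivAt x hs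
  have hmul1 := (h1.const_mul (2:ℝ)).mul hinv
  have hmul0 := h0.mul hinv
  have hfun1 : (fun y : EuclideanSpace ℝ (Fin 2) => N y 1)
      = fun y : EuclideanSpace ℝ (Fin 2) =>
        (2 * y 1) * ((fun t => t⁻¹) ∘ fun y : EuclideanSpace ℝ (Fin 2) =>
          ((Real.sqrt ·) ∘ fun y : EuclideanSpace ℝ (Fin 2) => y 0 * y 0 + 4 * (y 1 * y 1)) y) y := by
    funext y
    rw [(hN y).2, div_eq_mul_inv]
    simp only [Function.comp]
    rw [show (y 0:ℝ) ^ 2 + 4 * (y 1) ^ 2 = y 0 * y 0 + 4 * (y 1 * y 1) from by ring]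
  have hfun0 : (fun y : EuclideanSpace ℝ (Fin 2) => N y 0)
      = fun y : EuclideanSpace ℝ (Fin 2) =>
        y 0 * ((fun t => t⁻¹) ∘ fun y : EuclideanSpace ℝ (Fin 2) =>
          ((Real.sqrt ·) ∘ fun y : EuclideanSpace ℝ (Fin 2) => y 0 * y 0 + 4 * (y 1 * y 1)) y) y := by
    funext y
    rw [(hN y).1, div_eq_mul_inv]
    simp only [Function.comp]
    rw [show (y 0:ℝ) ^ 2 + 4 * (y 1) ^ 2 = y 0 * y 0 + 4 * (y 1 * y 1) from by ring]
  have hrw : ((x 0) ^ 2 + 4 * (x 1) ^ 2) ^ ((3:ℝ)/2) = u * Real.sqrt u := by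
    have h1 : (x 0) ^ 2 + 4 * (x 1) ^ 2 = u := by ring
    rw [h1, show (3:ℝ)/2 = 1 + 1/2 by norm_num, Real.rpow_add hu, Real.rpow_one,
      ← Real.sqrt_eq_rpow]
  constructor
  · rw [hfun1]; erw [hmul1.fderiv]
    simp only [ContinuousLinearMap.add_apply, ContinuousLinearMap.smul_apply,
      PiLp.proj_apply, EuclideanSpace.single_apply, Function.comp,
      smul_eq_mul]
    simp only [show ((1:Fin 2) = 0) ↔ False by decide, show ((0:Fin 2) = 1) ↔ False by decide,
      if_true, if_false, ite_true, ite_false]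
    rw [hrw]
    field_simp
    rw [Real.sq_sqrt hu.le]
    ring
  · rw [hfun0]; erw [hmul0.fderiv]
    simp only [ContinuousLinearMap.add_apply, ContinuousLinearMap.smul_apply,
      PiLp.proj_apply, EuclideanSpace.single_apply, Function.comp,
      smul_eq_mul]
    simp only [show ((1:Fin 2) = 0) ↔ False by decide, show ((0:Fin 2) = 1) ↔ False by decide,
      if_true, if_false, ite_true, ite_false]
    rw [hrw]
    field_simp
    rw [Real.sq_sqrt hu.le]
    ring

/-- The normalized gradient field `N = ∇Ψ/‖∇Ψ‖` of `Ψ(x) = x₁² + 2x₂² − 1` (whose zero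
set is an ellipse), given by `N(x) = (x₁, 2x₂)/√(x₁² + 4x₂²)`, has a non-symmetric
Jacobian: `∂₁N₂(x) = −2x₂x₁/(x₁²+4x₂²)^{3/2}` and `∂₂N₁(x) = −4x₁x₂/(x₁²+4x₂²)^{3/2}`,
which differ whenever `x₁ ≠ 0` and `x₂ ≠ 0`. Hence it is not a proper extension of the
unit normal field of the ellipse. -/
theorem normalized_gradient_of_ellipse_not_proper
    (Ψ : EuclideanSpace ℝ (Fin 2) → ℝ)
    (hΨ : ∀ x : EuclideanSpace ℝ (Fin 2), Ψ x = (x 0) ^ 2 + 2 * (x 1) ^ 2 - 1)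
    (N : EuclideanSpace ℝ (Fin 2) → EuclideanSpace ℝ (Fin 2))
    (hN : ∀ x : EuclideanSpace ℝ (Fin 2),
      N x 0 = x 0 / Real.sqrt ((x 0) ^ 2 + 4 * (x 1) ^ 2) ∧
      N x 1 = 2 * x 1 / Real.sqrt ((x 0) ^ 2 + 4 * (x 1) ^ 2)) :
    (∀ x : EuclideanSpace ℝ (Fin 2), x ≠ 0 →
      N x = ‖gradient Ψ x‖⁻¹ • gradient Ψ x) ∧
    (∀ x : EuclideanSpace ℝ (Fin 2), x ≠ 0 →
      fderiv ℝ (fun y => N y 1) x (EuclideanSpace.single 0 1)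
        = -(2 * x 1 * x 0) / ((x 0) ^ 2 + 4 * (x 1) ^ 2) ^ ((3 : ℝ) / 2) ∧
      fderiv ℝ (fun y => N y 0) x (EuclideanSpace.single 1 1)
        = -(4 * x 0 * x 1) / ((x 0) ^ 2 + 4 * (x 1) ^ 2) ^ ((3 : ℝ) / 2)) ∧
    (∀ x : EuclideanSpace ℝ (Fin 2), x 0 ≠ 0 → x 1 ≠ 0 →
      fderiv ℝ (fun y => N y 1) x (EuclideanSpace.single 0 1)
        ≠ fderiv ℝ (fun y => N y 0) x (EuclideanSpace.single 1 1)) := by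
  refine ⟨?_, fun x hx => aux_deriv x hx N hN, ?_⟩
  · intro x hx
    have hu : 0 < x 0 * x 0 + 4 * (x 1 * x 1) := aux_pos hx
    have hu2 : (0:ℝ) < (x 0) ^ 2 + 4 * (x 1) ^ 2 := by nlinarith
    have hsu : Real.sqrt ((x 0) ^ 2 + 4 * (x 1) ^ 2) ≠ 0 := by positivity
    rw [aux_grad Ψ hΨ x]
    set g : EuclideanSpace ℝ (Fin 2) :=
      EuclideanSpace.single 0 (2 * x 0) + EuclideanSpace.single 1 (4 * x 1) with hg
    have hnorm : ‖g‖ = 2 * Real.sqrt ((x 0) ^ 2 + 4 * (x 1) ^ 2) := by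
      rw [EuclideanSpace.norm_eq]
      simp only [hg, PiLp.add_apply, EuclideanSpace.single_apply, Fin.sum_univ_two]
      rw [Real.norm_eq_abs, Real.norm_eq_abs, sq_abs, sq_abs]
      norm_num
      rw [show (2 * x 0) ^ 2 + (4 * x 1) ^ 2 = 2 ^ 2 * ((x 0) ^ 2 + 4 * (x 1) ^ 2) from by ring,
        Real.sqrt_mul (by positivity), Real.sqrt_sq (by norm_num)]
    have hg0 : g 0 = 2 * x 0 := by
      simp [hg, EuclideanSpace.single_apply]
    have hg1 : g 1 = 4 * x 1 := by
      simp [hg, EuclideanSpace.single_apply]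
    ext i
    fin_cases i
    · show N x 0 = ‖g‖⁻¹ * g 0
      rw [(hN x).1, hnorm, hg0]
      field_simp
    · show N x 1 = ‖g‖⁻¹ * g 1
      rw [(hN x).2, hnorm, hg1]
      field_simp
      ring
  · intro x hx0 hx1 heq
    have hx : x ≠ 0 := fun h => hx0 (by rw [h]; rfl)
    obtain ⟨e1, e0⟩ := aux_deriv x hx N hN
    rw [e1, e0] at heq
    have hu : 0 < x 0 * x 0 + 4 * (x 1 * x 1) := aux_pos hx
    have hu2 : (0:ℝ) < (x 0) ^ 2 + 4 * (x 1) ^ 2 := by nlinarith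
    have hd : (0:ℝ) < ((x 0) ^ 2 + 4 * (x 1) ^ 2) ^ ((3:ℝ)/2) :=
      Real.rpow_pos_of_pos hu2 _
    rw [div_eq_div_iff hd.ne' hd.ne'] at heq
    have h2 : -(2 * x 1 * x 0) = -(4 * x 0 * x 1) := mul_right_cancel₀ hd.ne' heq
    have hz : x 0 * x 1 = 0 := by linear_combination h2 / 2
    exact mul_ne_zero hx0 hx1 hz
end
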